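/- Let A be an associative unital ℂ-algebra containing elements T_1, P_1 with T_1² = (q−q⁻¹)T_1 + 1, P_1² = P_1, and define P_2 = q(P_1 T_1 P_1 − (q−q⁻¹)P_1), X_1 = 1 − P_1, X_2 = T_1 X_1 T_1. Then the identity X_1 T_1 X_1 T_1 = T_1 X_1 T_1 X_1 holds if and only if P_2 T_1 = T_1 P_2. -/
import Mathlib


/-- In an associative unital ℂ-algebra with `T_1² = (q - q⁻¹)T_1 + 1` and `P_1² = P_1`,
setting `P_2 = q(P_1 T_1 P_1 - (q - q⁻¹)P_1)`, `X_1 = 1 - P_1`, `X_2 = T_1 X_1 T_1`,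
we have `X_1 T_1 X_1 T_1 = T_1 X_1 T_1 X_1` iff `P_2 T_1 = T_1 P_2`. -/
theorem stmt5 {A : Type*} [Ring A] [Algebra ℂ A] (q : ℂ) (hq : q ≠ 0)
    (T1 P1 : A)
    (hT : T1 * T1 = (q - q⁻¹) • T1 + 1)
    (hP : P1 * P1 = P1) :
    ∀ P2 X1 X2 : A,
      P2 = q • (P1 * T1 * P1 - (q - q⁻¹) • P1) →
      X1 = 1 - P1 → X2 = T1 * X1 * T1 →
      (X1 * T1 * X1 * T1 = T1 * X1 * T1 * X1 ↔ P2 * T1 = T1 * P2) := by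
  intro P2 X1 X2 hP2 hX1 hX2
  subst hP2 hX1 hX2
  have key : q • ((1 - P1) * T1 * (1 - P1) * T1 - T1 * (1 - P1) * T1 * (1 - P1))
      = (q • (P1 * T1 * P1 - (q - q⁻¹) • P1)) * T1
        - T1 * (q • (P1 * T1 * P1 - (q - q⁻¹) • P1)) := by
    have e1 : (1 - P1) * T1 * (1 - P1) * T1
        = T1 * T1 - P1 * (T1 * T1) - T1 * P1 * T1 + P1 * T1 * P1 * T1 := by
      noncomm_ring
    have e2 : T1 * (1 - P1) * T1 * (1 - P1)
        = T1 * T1 - (T1 * T1) * P1 - T1 * P1 * T1 + T1 * P1 * T1 * P1 := by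
      noncomm_ring
    rw [e1, e2, hT]
    noncomm_ring
    module
  constructor
  · intro h
    have h0 : (0 : A) = (q • (P1 * T1 * P1 - (q - q⁻¹) • P1)) * T1
        - T1 * (q • (P1 * T1 * P1 - (q - q⁻¹) • P1)) := by
      rw [← key, h, sub_self, smul_zero]
    exact sub_eq_zero.mp h0.symm
  · intro h
    have h0 : q • ((1 - P1) * T1 * (1 - P1) * T1 - T1 * (1 - P1) * T1 * (1 - P1)) = 0 := by
      rw [key, h, sub_self]
    rcases smul_eq_zero.mp h0 with h1 | h1
    · exact absurd h1 hq
    · exact sub_eq_zero.mp h1
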